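/- Let G be a graph admitting a p-treedepth coloring with ℓ colors, where p = |V(H)| for a fixed graph H, and let 𝓗 be a set of edge-disjoint copies of H in G. Then there exists 𝓗' ⊆ 𝓗 with |𝓗'| ≥ |𝓗|/ℓ^{|V(H)|} such that the subgraph G[𝓗'] induced by the copies in 𝓗' has treedepth at most |V(H)|. -/

import Mathlib

open SimpleGraph

variable {α β : Type*}

/-- A copy of `H` in `G`: an injective map sending edges to edges. -/
def IsCopy (H : SimpleGraph α) (G : SimpleGraph β) (f : α → β) : Prop :=
  Function.Injective f ∧ ∀ a b, H.Adj a b → G.Adj (f a) (f b)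

/-- The edge set of the image of a copy. -/
def copyEdges (H : SimpleGraph α) (f : α → β) : Set (Sym2 β) :=
  Sym2.map f '' H.edgeSet

/-- The subgraph `G[𝓗]` of `G` induced by the union of the edge images of the copies. -/
noncomputable def unionGraph (H : SimpleGraph α) (𝓗 : Finset (α → β)) : SimpleGraph β :=
  SimpleGraph.fromEdgeSet (⋃ f ∈ 𝓗, copyEdges H f)

/-- A tree embedding of `G`: a partial order in which down-sets of vertices are chains
and adjacent vertices are comparable. -/
structure TreeEmbedding (G : SimpleGraph β) where
  le : β → β → Prop
  refl : ∀ a, le a a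
  antisymm : ∀ a b, le a b → le b a → a = b
  trans : ∀ a b c, le a b → le b c → le a c
  downChain : ∀ v a b, le a v → le b v → le a b ∨ le b a
  adjComparable : ∀ a b, G.Adj a b → le a b ∨ le b a

/-- The depth of a tree embedding is at most `k`: every chain has at most `k` elements. -/
def TreeEmbedding.DepthLE {G : SimpleGraph β} (T : TreeEmbedding G) (k : ℕ) : Prop :=
  ∀ s : Finset β, (∀ a ∈ s, ∀ b ∈ s, T.le a b ∨ T.le b a) → s.card ≤ k

/-- The treedepth of `G` is at most `k`. -/
def TreedepthLE (G : SimpleGraph β) (k : ℕ) : Prop :=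
  ∃ T : TreeEmbedding G, T.DepthLE k

/-- The subgraph of `G` induced by a vertex set `s`, viewed as a graph on the same
vertex type. -/
def restrictTo (G : SimpleGraph β) (s : Set β) : SimpleGraph β where
  Adj a b := G.Adj a b ∧ a ∈ s ∧ b ∈ s
  symm := ⟨fun a b ⟨h, ha, hb⟩ => ⟨h.symm, hb, ha⟩⟩
  loopless := ⟨fun a ⟨h, _, _⟩ => G.irrefl h⟩

/-- `c` is a `p`-treedepth coloring of `G` (with colors `Fin ℓ`): for every nonempty set
`S` of at most `p` colors, the subgraph induced by the vertices colored in `S` has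
treedepth at most `|S|`. -/
def IsTreedepthColoring (G : SimpleGraph β) (p ℓ : ℕ) (c : β → Fin ℓ) : Prop :=
  ∀ S : Finset (Fin ℓ), S.Nonempty → S.card ≤ p →
    TreedepthLE (restrictTo G {v | c v ∈ S}) S.card

lemma tdle_mono {G G' : SimpleGraph β} (h : ∀ a b, G'.Adj a b → G.Adj a b)
    {k k' : ℕ} (hk : k ≤ k') : TreedepthLE G k → TreedepthLE G' k' := by
  rintro ⟨T, hT⟩
  exact ⟨⟨T.le, T.refl, T.antisymm, T.trans, T.downChain,
    fun a b hab => T.adjComparable a b (h a b hab)⟩,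
    fun s hs => (hT s hs).trans hk⟩

lemma tdle_empty (G : SimpleGraph β) (hE : ∀ a b, ¬ G.Adj a b) {k : ℕ} (hk : 1 ≤ k) :
    TreedepthLE G k := by
  refine ⟨⟨Eq, fun a => rfl, fun _ _ h _ => h, fun a b c h h' => h.trans h',
    fun v a b ha hb => Or.inl (ha.trans hb.symm), fun a b hab => (hE a b hab).elim⟩,
    fun s hs => ?_⟩
  refine le_trans (Finset.card_le_one.2 fun a ha b hb => ?_) hk
  rcases hs a ha b hb with h | h
  · exact h
  · exact h.symm

/-- If `G` admits a `|V(H)|`-treedepth coloring with `ℓ` colors and `𝓗`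
is a set of edge-disjoint copies of `H` in `G`, then some `𝓗' ⊆ 𝓗` of size at least
`|𝓗|/ℓ^{|V(H)|}` satisfies that `G[𝓗']` has treedepth at most `|V(H)|`. -/
theorem stmt4 [Fintype α] [Nonempty α] [Fintype β] (H : SimpleGraph α) (G : SimpleGraph β)
    (ℓ : ℕ) (c : β → Fin ℓ)
    (hcol : IsTreedepthColoring G (Fintype.card α) ℓ c)
    (𝓗 : Finset (α → β))
    (hcopies : ∀ f ∈ 𝓗, IsCopy H G f)
    (hdisj : ∀ f ∈ 𝓗, ∀ g ∈ 𝓗, f ≠ g → Disjoint (copyEdges H f) (copyEdges H g)) :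
    ∃ 𝓗' ⊆ 𝓗,
      (𝓗'.card : ℝ) ≥ 𝓗.card / (ℓ : ℝ) ^ (Fintype.card α) ∧
      TreedepthLE (unionGraph H 𝓗') (Fintype.card α) := by
  rcases Finset.eq_empty_or_nonempty 𝓗 with rfl | ⟨f₀, hf₀⟩
  · refine ⟨∅, Finset.Subset.refl _, by simp, tdle_empty _ ?_ Fintype.card_pos⟩
    intro a b hab
    simp [unionGraph] at hab
  -- ℓ ≥ 1 since β is nonempty
  have hβ : Nonempty β := ⟨f₀ (Classical.arbitrary α)⟩
  have hℓ : 0 < ℓ := (c (Classical.arbitrary β)).pos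
  -- pigeonhole on color patterns
  classical
  set pat : (α → β) → (α → Fin ℓ) := fun f => c ∘ f with hpat
  obtain ⟨t, -, ht⟩ := Finset.exists_max_image (Finset.univ : Finset (α → Fin ℓ))
    (fun t => (𝓗.filter fun f => pat f = t).card) ⟨pat f₀, Finset.mem_univ _⟩
  set 𝓗' := 𝓗.filter fun f => pat f = t with h𝓗'
  have hsub : 𝓗' ⊆ 𝓗 := Finset.filter_subset _ _
  have hcard : 𝓗.card ≤ ℓ ^ (Fintype.card α) * 𝓗'.card := by
    have h1 : 𝓗.card = ∑ b : α → Fin ℓ, (𝓗.filter fun f => pat f = b).card :=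
      Finset.card_eq_sum_card_fiberwise (fun f _ => Finset.mem_univ (pat f))
    calc 𝓗.card = ∑ b : α → Fin ℓ, (𝓗.filter fun f => pat f = b).card := h1
      _ ≤ ∑ _b : α → Fin ℓ, 𝓗'.card := Finset.sum_le_sum fun b _ => ht b (Finset.mem_univ b)
      _ = Fintype.card (α → Fin ℓ) * 𝓗'.card := by rw [Finset.sum_const, Finset.card_univ,
          smul_eq_mul]
      _ = ℓ ^ (Fintype.card α) * 𝓗'.card := by rw [Fintype.card_fun, Fintype.card_fin]
  refine ⟨𝓗', hsub, ?_, ?_⟩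
  · rw [ge_iff_le, div_le_iff₀ (by positivity)]
    calc (𝓗.card : ℝ) ≤ (ℓ ^ (Fintype.card α) * 𝓗'.card : ℕ) := by exact_mod_cast hcard
      _ = (𝓗'.card : ℝ) * (ℓ : ℝ) ^ (Fintype.card α) := by push_cast; ring
  · set S : Finset (Fin ℓ) := Finset.image t Finset.univ with hS
    have hScard : S.card ≤ Fintype.card α :=
      (Finset.card_image_le).trans (by simp)
    have hSne : S.Nonempty := ⟨t (Classical.arbitrary α), Finset.mem_image.2
      ⟨_, Finset.mem_univ _, rfl⟩⟩
    have htd := hcol S hSne hScard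
    refine tdle_mono ?_ hScard htd
    intro a b hab
    rw [unionGraph, fromEdgeSet_adj] at hab
    obtain ⟨hmem, hne⟩ := hab
    simp only [Set.mem_iUnion] at hmem
    obtain ⟨f, hf, he⟩ := hmem
    obtain ⟨e, heH, hmape⟩ := he
    induction e with
    | h x y =>
      rw [Sym2.map_pair_eq, Sym2.eq_iff] at hmape
      have hfmem := hsub hf
      have hadjG : G.Adj (f x) (f y) :=
        (hcopies f hfmem).2 x y (H.mem_edgeSet.1 heH)
      have hpatf : pat f = t := (Finset.mem_filter.1 hf).2
      have hcx : c (f x) ∈ S :=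
        Finset.mem_image.2 ⟨x, Finset.mem_univ _, (congrFun hpatf x).symm⟩
      have hcy : c (f y) ∈ S :=
        Finset.mem_image.2 ⟨y, Finset.mem_univ _, (congrFun hpatf y).symm⟩
      rcases hmape with ⟨hx, hy⟩ | ⟨hx, hy⟩
      · exact ⟨hx ▸ hy ▸ hadjG, hx ▸ hcx, hy ▸ hcy⟩
      · exact ⟨hy ▸ hx ▸ hadjG.symm, hy ▸ hcy, hx ▸ hcx⟩
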